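/- Let G be a finite abelian group and let F be a functor from P(G) to types. Assume that for every chain of subgroups H1 ⊊ K ⊊ H2 of G, the structure map F({H1,H2} ≤ {H1,K,H2}) is injective on the union of the image of F({H1} ≤ {H1,H2}) and the image of F({H2} ≤ {H1,H2}). Then the restriction map from the set of sections of F over P(G) to the set of sections of the restriction of F to P''(G) is a bijection. Consequently, the limit of F over P(G) can be computed by restricting to the subposet P''(G) consisting of singletons and covering pairs. -/

import Mathlib

open CategoryTheory

/-- `P(G)`: the poset of nonempty sets of subgroups of `G` that are totally ordered by
inclusion, ordered by set inclusion. -/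
abbrev ChainPoset (G : Type*) [Group G] : Type _ :=
  {S : Set (Subgroup G) // S.Nonempty ∧ IsChain (· ≤ ·) S}

/-- The singleton `{H} ∈ P(G)` associated to a subgroup `H ⊆ G`. -/
def ChainPoset.sing {G : Type*} [Group G] (H : Subgroup G) : ChainPoset G :=
  ⟨{H}, Set.singleton_nonempty H, Set.subsingleton_singleton.isChain⟩

/-- The pair `{H₁, H₂} ∈ P(G)` associated to subgroups `H₁ ≤ H₂` of `G`. -/
def ChainPoset.pair {G : Type*} [Group G] (H1 H2 : Subgroup G) (h : H1 ≤ H2) :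
    ChainPoset G :=
  ⟨{H1, H2}, ⟨H1, Or.inl rfl⟩, by
    intro a ha b hb _
    simp only [Set.mem_insert_iff, Set.mem_singleton_iff] at ha hb
    rcases ha with rfl | rfl <;> rcases hb with rfl | rfl
    exacts [Or.inl le_rfl, Or.inl h, Or.inr h, Or.inl le_rfl]⟩

/-- The triple `{H₁, K, H₂} ∈ P(G)` associated to subgroups `H₁ ≤ K ≤ H₂` of `G`. -/
def ChainPoset.triple {G : Type*} [Group G] (H1 K H2 : Subgroup G) (h1 : H1 ≤ K)
    (h2 : K ≤ H2) : ChainPoset G :=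
  ⟨{H1, K, H2}, ⟨H1, Or.inl rfl⟩, by
    intro a ha b hb _
    simp only [Set.mem_insert_iff, Set.mem_singleton_iff] at ha hb
    rcases ha with rfl | rfl | rfl <;> rcases hb with rfl | rfl | rfl
    exacts [Or.inl le_rfl, Or.inl h1, Or.inl (h1.trans h2), Or.inr h1, Or.inl le_rfl,
      Or.inl h2, Or.inr (h1.trans h2), Or.inr h2, Or.inl le_rfl]⟩

lemma ChainPoset.sing_le_pair_left {G : Type*} [Group G] {H1 H2 : Subgroup G}
    (h : H1 ≤ H2) : ChainPoset.sing H1 ≤ ChainPoset.pair H1 H2 h := by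
  intro a ha
  simp only [ChainPoset.sing, Set.mem_singleton_iff] at ha
  subst ha
  exact Set.mem_insert _ _

lemma ChainPoset.sing_le_pair_right {G : Type*} [Group G] {H1 H2 : Subgroup G}
    (h : H1 ≤ H2) : ChainPoset.sing H2 ≤ ChainPoset.pair H1 H2 h := by
  intro a ha
  simp only [ChainPoset.sing, Set.mem_singleton_iff] at ha
  subst ha
  exact Set.mem_insert_iff.mpr (Or.inr rfl)

lemma ChainPoset.pair_le_triple {G : Type*} [Group G] {H1 K H2 : Subgroup G}
    (h1 : H1 ≤ K) (h2 : K ≤ H2) :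
    ChainPoset.pair H1 H2 (h1.trans h2) ≤ ChainPoset.triple H1 K H2 h1 h2 := by
  intro a ha
  simp only [ChainPoset.pair, Set.mem_insert_iff, Set.mem_singleton_iff] at ha
  rcases ha with rfl | rfl
  · exact Set.mem_insert _ _
  · exact Set.mem_insert_iff.mpr (Or.inr (Set.mem_insert_iff.mpr (Or.inr rfl)))

/-- `P''(G)`: the full subposet of `P(G)` consisting of the singletons `{H}` together
with the covering pairs `{H₁, H₂}`, i.e. those with `H₁ ⊊ H₂` such that no subgroup `K`
satisfies `H₁ ⊊ K ⊊ H₂`. -/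
abbrev ChainPoset.covers (G : Type*) [Group G] : Type _ :=
  {S : ChainPoset G //
    (∃ H : Subgroup G, S.1 = {H}) ∨
      ∃ H1 H2 : Subgroup G, H1 < H2 ∧ S.1 = {H1, H2} ∧
        ¬∃ K : Subgroup G, H1 < K ∧ K < H2}

/-- The inclusion functor `P''(G) ⥤ P(G)`. -/
def ChainPoset.coversIncl (G : Type*) [Group G] : ChainPoset.covers G ⥤ ChainPoset G :=
  Monotone.functor (f := (Subtype.val : ChainPoset.covers G → ChainPoset G))
    (fun _ _ h => h)

section Aux

variable {G : Type*} [Group G]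

lemma ChainPoset.sing_le {S : ChainPoset G} {H : Subgroup G} (hH : H ∈ S.1) :
    ChainPoset.sing H ≤ S := by
  intro a ha
  simp only [ChainPoset.sing, Set.mem_singleton_iff] at ha
  subst ha; exact hH

lemma ChainPoset.pair_le {S : ChainPoset G} {H1 H2 : Subgroup G} (h : H1 ≤ H2)
    (h1 : H1 ∈ S.1) (h2 : H2 ∈ S.1) : ChainPoset.pair H1 H2 h ≤ S := by
  intro a ha
  simp only [ChainPoset.pair, Set.mem_insert_iff, Set.mem_singleton_iff] at ha
  rcases ha with rfl | rfl
  exacts [h1, h2]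

lemma ChainPoset.pair_left_le_triple {H1 K H2 : Subgroup G} (h1 : H1 ≤ K) (h2 : K ≤ H2) :
    ChainPoset.pair H1 K h1 ≤ ChainPoset.triple H1 K H2 h1 h2 := by
  intro a ha
  simp only [ChainPoset.pair, Set.mem_insert_iff, Set.mem_singleton_iff] at ha
  rcases ha with rfl | rfl <;>
    simp [ChainPoset.triple, Set.mem_insert_iff]

lemma ChainPoset.pair_right_le_triple {H1 K H2 : Subgroup G} (h1 : H1 ≤ K) (h2 : K ≤ H2) :
    ChainPoset.pair K H2 h2 ≤ ChainPoset.triple H1 K H2 h1 h2 := by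
  intro a ha
  simp only [ChainPoset.pair, Set.mem_insert_iff, Set.mem_singleton_iff] at ha
  rcases ha with rfl | rfl <;>
    simp [ChainPoset.triple, Set.mem_insert_iff]

lemma ChainPoset.map_hom_congr (F : ChainPoset G ⥤ Type*) {a b : ChainPoset G}
    (f g : a ⟶ b) (x : F.obj a) : F.map f x = F.map g x := by
  rw [Subsingleton.elim f g]

lemma ChainPoset.mapmap (F : ChainPoset G ⥤ Type*) {a b c : ChainPoset G}
    (f : a ⟶ b) (g : b ⟶ c) (h : a ⟶ c) (x : F.obj a) :
    F.map g (F.map f x) = F.map h x := by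
  rw [← FunctorToTypes.map_comp_apply]
  exact ChainPoset.map_hom_congr F _ _ _

lemma Subgroup.ncard_lt_of_lt {G : Type*} [Group G] [Finite G] {H K : Subgroup G}
    (h : H < K) : Nat.card H < Nat.card K := by
  by_contra hc
  exact h.ne (Subgroup.eq_of_le_of_card_ge h.le (not_lt.1 hc))

end Aux

/-- **The limit over `P(G)` is computed on `P''(G)`.**  Let `G` be a finite abelian
group and `F : P(G) ⥤ Type` a functor such that for every chain `H₁ ⊊ K ⊊ H₂` the
structure map `F({H₁,H₂} ≤ {H₁,K,H₂})` is injective on the union of the images of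
`F({H₁} ≤ {H₁,H₂})` and `F({H₂} ≤ {H₁,H₂})`.  Then the restriction map from sections
of `F` over `P(G)` to sections of the restriction of `F` to the subposet `P''(G)` of
singletons and covering pairs is a bijection. -/
theorem sections_restrict_to_covers_bijective (G : Type*) [CommGroup G] [Finite G]
    (F : ChainPoset G ⥤ Type*)
    (hinj : ∀ (H1 K H2 : Subgroup G) (h1 : H1 < K) (h2 : K < H2),
      Set.InjOn (F.map (homOfLE (ChainPoset.pair_le_triple h1.le h2.le)))
        (Set.range (F.map (homOfLE (ChainPoset.sing_le_pair_left (h1.trans h2).le))) ∪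
          Set.range (F.map (homOfLE (ChainPoset.sing_le_pair_right (h1.trans h2).le))))) :
    Function.Bijective
      (fun x : F.sections =>
        (⟨fun S => x.1 S.1, fun {S T} f => x.2 ((ChainPoset.coversIncl G).map f)⟩ :
          (ChainPoset.coversIncl G ⋙ F).sections)) := by
    classical
  constructor
  · rintro ⟨x, hx⟩ ⟨x', hx'⟩ h
    have hs : ∀ H : Subgroup G, x (ChainPoset.sing H) = x' (ChainPoset.sing H) := by
      intro H
      exact congrFun (congrArg Subtype.val h) ⟨ChainPoset.sing H, Or.inl ⟨H, rfl⟩⟩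
    refine Subtype.ext (funext fun S => ?_)
    obtain ⟨H, hH⟩ := S.2.1
    calc x S = F.map (homOfLE (ChainPoset.sing_le hH)) (x (ChainPoset.sing H)) :=
          (hx (homOfLE (ChainPoset.sing_le hH))).symm
      _ = F.map (homOfLE (ChainPoset.sing_le hH)) (x' (ChainPoset.sing H)) := by rw [hs]
      _ = x' S := hx' _
  · intro y
    set yH : ∀ H : Subgroup G, F.obj (ChainPoset.sing H) :=
      fun H => y.1 ⟨ChainPoset.sing H, Or.inl ⟨H, rfl⟩⟩ with hyH
    have key : ∀ n (H1 H2 : Subgroup G) (h : H1 ≤ H2), Nat.card H2 - Nat.card H1 ≤ n →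
        F.map (homOfLE (ChainPoset.sing_le_pair_left h)) (yH H1)
          = F.map (homOfLE (ChainPoset.sing_le_pair_right h)) (yH H2) := by
      intro n
      induction n with
      | zero =>
        intro H1 H2 h hn
        obtain rfl : H1 = H2 :=
          Subgroup.eq_of_le_of_card_ge h (Nat.le_of_sub_eq_zero (Nat.le_zero.1 hn))
        exact ChainPoset.map_hom_congr F _ _ _
      | succ n ih =>
        intro H1 H2 h hn
        rcases eq_or_lt_of_le h with rfl | hlt
        · exact ChainPoset.map_hom_congr F _ _ _
        by_cases hK : ∃ K : Subgroup G, H1 < K ∧ K < H2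
        · obtain ⟨K, h1, h2⟩ := hK
          have c1 : Nat.card H1 < Nat.card K := Subgroup.ncard_lt_of_lt h1
          have c2 : Nat.card K < Nat.card H2 := Subgroup.ncard_lt_of_lt h2
          have e1 := ih H1 K h1.le (by omega)
          have e2 := ih K H2 h2.le (by omega)
          refine hinj H1 K H2 h1 h2 (Or.inl ⟨yH H1, rfl⟩) (Or.inr ⟨yH H2, rfl⟩) ?_
          calc F.map (homOfLE (ChainPoset.pair_le_triple h1.le h2.le))
                (F.map (homOfLE (ChainPoset.sing_le_pair_left (h1.trans h2).le)) (yH H1))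
              = F.map (homOfLE ((ChainPoset.sing_le_pair_left h1.le).trans
                  (ChainPoset.pair_left_le_triple h1.le h2.le))) (yH H1) :=
                ChainPoset.mapmap F _ _ _ _
            _ = F.map (homOfLE (ChainPoset.pair_left_le_triple h1.le h2.le))
                (F.map (homOfLE (ChainPoset.sing_le_pair_left h1.le)) (yH H1)) :=
                (ChainPoset.mapmap F _ _ _ _).symm
            _ = F.map (homOfLE (ChainPoset.pair_left_le_triple h1.le h2.le))
                (F.map (homOfLE (ChainPoset.sing_le_pair_right h1.le)) (yH K)) := by rw [e1]
            _ = F.map (homOfLE ((ChainPoset.sing_le_pair_left h2.le).trans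
                  (ChainPoset.pair_right_le_triple h1.le h2.le))) (yH K) :=
                ChainPoset.mapmap F _ _ _ _
            _ = F.map (homOfLE (ChainPoset.pair_right_le_triple h1.le h2.le))
                (F.map (homOfLE (ChainPoset.sing_le_pair_left h2.le)) (yH K)) :=
                (ChainPoset.mapmap F _ _ _ _).symm
            _ = F.map (homOfLE (ChainPoset.pair_right_le_triple h1.le h2.le))
                (F.map (homOfLE (ChainPoset.sing_le_pair_right h2.le)) (yH H2)) := by rw [e2]
            _ = F.map (homOfLE (ChainPoset.pair_le_triple h1.le h2.le))
                (F.map (homOfLE (ChainPoset.sing_le_pair_right (h1.trans h2).le)) (yH H2)) := by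
                refine (ChainPoset.mapmap F _ _
                  (homOfLE ((ChainPoset.sing_le_pair_right h2.le).trans
                    (ChainPoset.pair_right_le_triple h1.le h2.le))) _).trans
                  (ChainPoset.mapmap F _ _ _ _).symm
        · -- covering pair: it lies in P''(G)
          set cp : ChainPoset.covers G :=
            ⟨ChainPoset.pair H1 H2 h, Or.inr ⟨H1, H2, hlt, rfl, hK⟩⟩ with hcp
          have f1 : (⟨ChainPoset.sing H1, Or.inl ⟨H1, rfl⟩⟩ : ChainPoset.covers G) ⟶ cp :=
            homOfLE (ChainPoset.sing_le_pair_left h)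
          have f2 : (⟨ChainPoset.sing H2, Or.inl ⟨H2, rfl⟩⟩ : ChainPoset.covers G) ⟶ cp :=
            homOfLE (ChainPoset.sing_le_pair_right h)
          calc F.map (homOfLE (ChainPoset.sing_le_pair_left h)) (yH H1)
              = (show F.obj (ChainPoset.pair H1 H2 h) from
                F.map ((ChainPoset.coversIncl G).map f1) (yH H1)) :=
                ChainPoset.map_hom_congr F _ _ _
            _ = (show F.obj (ChainPoset.pair H1 H2 h) from y.1 cp) := y.2 f1
            _ = (show F.obj (ChainPoset.pair H1 H2 h) from
                F.map ((ChainPoset.coversIncl G).map f2) (yH H2)) := (y.2 f2).symm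
            _ = F.map (homOfLE (ChainPoset.sing_le_pair_right h)) (yH H2) :=
                ChainPoset.map_hom_congr F _ _ _
    have key' : ∀ (H1 H2 : Subgroup G) (h : H1 ≤ H2),
        F.map (homOfLE (ChainPoset.sing_le_pair_left h)) (yH H1)
          = F.map (homOfLE (ChainPoset.sing_le_pair_right h)) (yH H2) :=
      fun H1 H2 h => key _ H1 H2 h le_rfl
    have agree : ∀ (S : ChainPoset G) (H H' : Subgroup G) (hH : H ∈ S.1) (hH' : H' ∈ S.1),
        F.map (homOfLE (ChainPoset.sing_le hH)) (yH H)
          = F.map (homOfLE (ChainPoset.sing_le hH')) (yH H') := by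
      have main : ∀ (S : ChainPoset G) (H H' : Subgroup G) (hH : H ∈ S.1) (hH' : H' ∈ S.1),
          H ≤ H' →
          F.map (homOfLE (ChainPoset.sing_le hH)) (yH H)
            = F.map (homOfLE (ChainPoset.sing_le hH')) (yH H') := by
        intro S H H' hH hH' hle
        calc F.map (homOfLE (ChainPoset.sing_le hH)) (yH H)
            = F.map (homOfLE (ChainPoset.pair_le hle hH hH'))
              (F.map (homOfLE (ChainPoset.sing_le_pair_left hle)) (yH H)) :=
              (ChainPoset.mapmap F _ _ _ _).symm
          _ = F.map (homOfLE (ChainPoset.pair_le hle hH hH'))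
              (F.map (homOfLE (ChainPoset.sing_le_pair_right hle)) (yH H')) := by
              rw [key']
          _ = F.map (homOfLE (ChainPoset.sing_le hH')) (yH H') :=
              ChainPoset.mapmap F _ _ _ _
      intro S H H' hH hH'
      rcases eq_or_ne H H' with rfl | hne
      · exact ChainPoset.map_hom_congr F _ _ _
      rcases S.2.2 hH hH' hne with hle | hle
      · exact main S H H' hH hH' hle
      · exact (main S H' H hH' hH hle).symm
    set x : ∀ S : ChainPoset G, F.obj S :=
      fun S => F.map (homOfLE (ChainPoset.sing_le S.2.1.choose_spec)) (yH S.2.1.choose) with hx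
    have xval : ∀ (S : ChainPoset G) (H : Subgroup G) (hH : H ∈ S.1),
        x S = F.map (homOfLE (ChainPoset.sing_le hH)) (yH H) :=
      fun S H hH => agree S _ H S.2.1.choose_spec hH
    have hsec : ∀ {S T : ChainPoset G} (f : S ⟶ T), F.map f (x S) = x T := by
      intro S T f
      rw [hx]
      calc F.map f (F.map (homOfLE (ChainPoset.sing_le S.2.1.choose_spec)) (yH S.2.1.choose))
          = F.map (homOfLE (ChainPoset.sing_le (leOfHom f S.2.1.choose_spec)))
            (yH S.2.1.choose) := ChainPoset.mapmap F _ _ _ _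
        _ = x T := (xval T _ (leOfHom f S.2.1.choose_spec)).symm
    refine ⟨⟨x, hsec⟩, ?_⟩
    refine Subtype.ext (funext fun S => ?_)
    have xsing : ∀ H : Subgroup G, x (ChainPoset.sing H) = yH H := by
      intro H
      rw [xval (ChainPoset.sing H) H rfl,
        Subsingleton.elim (homOfLE (ChainPoset.sing_le rfl)) (𝟙 (ChainPoset.sing H)),
        FunctorToTypes.map_id_apply]
    rcases S.2 with ⟨H, hsS⟩ | ⟨H1, H2, hlt, hsS, hKn⟩
    · have hS : S = ⟨ChainPoset.sing H, Or.inl ⟨H, rfl⟩⟩ :=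
        Subtype.ext (Subtype.ext hsS)
      rw [hS]
      exact xsing H
    · have hS : S = ⟨ChainPoset.pair H1 H2 hlt.le, Or.inr ⟨H1, H2, hlt, rfl, hKn⟩⟩ :=
        Subtype.ext (Subtype.ext hsS)
      rw [hS]
      have f1 : (⟨ChainPoset.sing H1, Or.inl ⟨H1, rfl⟩⟩ : ChainPoset.covers G) ⟶
          ⟨ChainPoset.pair H1 H2 hlt.le, Or.inr ⟨H1, H2, hlt, rfl, hKn⟩⟩ :=
        homOfLE (ChainPoset.sing_le_pair_left hlt.le)
      calc x (ChainPoset.pair H1 H2 hlt.le)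
          = F.map (homOfLE (ChainPoset.sing_le (Set.mem_insert H1 {H2})))
            (yH H1) := xval _ H1 (Set.mem_insert H1 {H2})
        _ = (show F.obj (ChainPoset.pair H1 H2 hlt.le) from
            F.map ((ChainPoset.coversIncl G).map f1) (yH H1)) :=
            ChainPoset.map_hom_congr F _ _ _
        _ = (show F.obj (ChainPoset.pair H1 H2 hlt.le) from
            y.1 ⟨ChainPoset.pair H1 H2 hlt.le, Or.inr ⟨H1, H2, hlt, rfl, hKn⟩⟩) := y.2 f1
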